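/- arXiv:2411.02898 — 2 statements merged into one kernel-verified Lean document; each statement's English description precedes it below -/
import Mathlib

section
/- Let a ≠ b be real numbers and define f_{a,b}(p) = (p e^a + (1−p) e^b) / e^{p a + (1−p) b} for p ∈ [0,1]. Then p₀ := 1/(1 − e^{−(b−a)}) − 1/(b−a) lies in [0,1], and max_{0 ≤ p ≤ 1} f_{a,b}(p) = f_{a,b}(p₀) = ((e^{b−a} − 1)/(b−a)) / exp(b − a + 1 − (b−a)/(1 − e^{−(b−a)})). -/
/-- For `a ≠ b` and `f(p) = (p e^a + (1-p) e^b) / e^{pa + (1-p)b}` on `[0,1]`,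
the point `p₀ = 1/(1 - e^{-(b-a)}) - 1/(b-a)` lies in `[0,1]`, `f` attains its maximum over
`[0,1]` at `p₀`, and
`f(p₀) = ((e^{b-a} - 1)/(b-a)) / exp(b - a + 1 - (b-a)/(1 - e^{-(b-a)}))`. -/
theorem max_exponential_ratio (a b : ℝ) (hab : a ≠ b) :
    (1 / (1 - Real.exp (-(b - a))) - 1 / (b - a)) ∈ Set.Icc (0 : ℝ) 1 ∧
    (∀ p ∈ Set.Icc (0 : ℝ) 1,
      (p * Real.exp a + (1 - p) * Real.exp b) / Real.exp (p * a + (1 - p) * b) ≤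
        ((1 / (1 - Real.exp (-(b - a))) - 1 / (b - a)) * Real.exp a +
            (1 - (1 / (1 - Real.exp (-(b - a))) - 1 / (b - a))) * Real.exp b) /
          Real.exp ((1 / (1 - Real.exp (-(b - a))) - 1 / (b - a)) * a +
            (1 - (1 / (1 - Real.exp (-(b - a))) - 1 / (b - a))) * b)) ∧
    ((1 / (1 - Real.exp (-(b - a))) - 1 / (b - a)) * Real.exp a +
        (1 - (1 / (1 - Real.exp (-(b - a))) - 1 / (b - a))) * Real.exp b) /
      Real.exp ((1 / (1 - Real.exp (-(b - a))) - 1 / (b - a)) * a +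
        (1 - (1 / (1 - Real.exp (-(b - a))) - 1 / (b - a))) * b) =
      ((Real.exp (b - a) - 1) / (b - a)) /
        Real.exp (b - a + 1 - (b - a) / (1 - Real.exp (-(b - a)))) := by
  have hx : b - a ≠ 0 := sub_ne_zero.mpr (Ne.symm hab)
  set x : ℝ := b - a with hxdef
  set c : ℝ := Real.exp x - 1 with hcdef
  have hc : c ≠ 0 := sub_ne_zero.mpr (fun h => hx (by rwa [Real.exp_eq_one_iff] at h))
  have hepos : (0:ℝ) < Real.exp x := Real.exp_pos x
  have hene : Real.exp x ≠ 0 := ne_of_gt hepos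
  have hxc : 0 < x * c := by
    rcases hx.lt_or_gt with h | h
    · have : Real.exp x < 1 := Real.exp_lt_one_iff.mpr h
      have hcneg : c < 0 := by simp [hcdef]; linarith
      exact mul_pos_of_neg_of_neg h hcneg
    · have : 1 < Real.exp x := Real.one_lt_exp_iff.mpr h
      have hcpos : 0 < c := by simp [hcdef]; linarith
      exact mul_pos h hcpos
  have hcx : 0 < c / x := by
    have h : c / x = (x * c) / x ^ 2 := by field_simp
    rw [h]
    exact div_pos hxc (by positivity)
  -- 1 - exp(-x) = c / exp x
  have h1me : 1 - Real.exp (-x) = c / Real.exp x := by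
    rw [Real.exp_neg]
    field_simp
    exact hcdef.symm
  have hP : 1 / (1 - Real.exp (-x)) - 1 / x = 1 - (1 / x - 1 / c) := by
    rw [h1me]
    field_simp
    ring
  set q₀ : ℝ := 1 / x - 1 / c with hq0def
  -- q₀ = (c - x)/(x*c)
  have hq0eq : q₀ = (c - x) / (x * c) := by
    rw [hq0def]; field_simp
  have hcx1 : Real.exp x ≥ x + 1 := Real.add_one_le_exp x
  have hq0nonneg : 0 ≤ q₀ := by
    rw [hq0eq]
    apply div_nonneg _ (le_of_lt hxc)
    simp [hcdef]; linarith
  have hexinv : Real.exp x * Real.exp (-x) = 1 := by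
    rw [← Real.exp_add]; simp
  have hq0le1 : q₀ ≤ 1 := by
    rw [hq0eq, div_le_one hxc]
    have h2 := Real.add_one_le_exp (-x)
    nlinarith [Real.exp_pos x]
  -- rewriting of f
  have hf : ∀ p : ℝ, (p * Real.exp a + (1 - p) * Real.exp b) / Real.exp (p * a + (1 - p) * b)
      = (1 + (1 - p) * c) * Real.exp (-((1 - p) * x)) := by
    intro p
    have h1 : Real.exp b = Real.exp a * Real.exp x := by
      rw [← Real.exp_add]; congr 1; simp [hxdef]
    have h2 : Real.exp (p * a + (1 - p) * b) = Real.exp a * Real.exp ((1 - p) * x) := by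
      rw [← Real.exp_add]; congr 1; simp [hxdef]; ring
    rw [h1, h2, Real.exp_neg]
    rw [div_eq_iff (by positivity)]
    field_simp [hcdef]
    ring
  -- core inequality
  have hcore : ∀ q : ℝ, (1 + q * c) * Real.exp (-(q * x)) ≤ (c / x) * Real.exp (-(q₀ * x)) := by
    intro q
    have hs : 1 + q * c = (c / x) * (1 + (q - q₀) * x) := by
      rw [hq0def]; field_simp; ring
    have hle : 1 + (q - q₀) * x ≤ Real.exp ((q - q₀) * x) := by
      have := Real.add_one_le_exp ((q - q₀) * x); linarith
    calc (1 + q * c) * Real.exp (-(q * x))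
        = (c / x) * ((1 + (q - q₀) * x) * Real.exp (-(q * x))) := by rw [hs]; ring
      _ ≤ (c / x) * (Real.exp ((q - q₀) * x) * Real.exp (-(q * x))) := by
          apply mul_le_mul_of_nonneg_left _ (le_of_lt hcx)
          exact mul_le_mul_of_nonneg_right hle (le_of_lt (Real.exp_pos _))
      _ = (c / x) * Real.exp (-(q₀ * x)) := by
          rw [← Real.exp_add]; congr 2; ring
  have h1P : 1 - (1 / (1 - Real.exp (-x)) - 1 / x) = q₀ := by
    rw [hP]; ring
  have hfP : ((1 / (1 - Real.exp (-x)) - 1 / x) * Real.exp a +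
        (1 - (1 / (1 - Real.exp (-x)) - 1 / x)) * Real.exp b) /
      Real.exp ((1 / (1 - Real.exp (-x)) - 1 / x) * a +
        (1 - (1 / (1 - Real.exp (-x)) - 1 / x)) * b)
      = (c / x) * Real.exp (-(q₀ * x)) := by
    rw [hf, h1P]
    congr 1
    rw [hq0def]; field_simp; ring
  refine ⟨⟨by rw [hP]; linarith, by rw [hP]; linarith⟩, ?_, ?_⟩
  · intro p _
    rw [hf p, hfP]
    exact hcore (1 - p)
  · rw [hfP]
    have hexp : x + 1 - x / (1 - Real.exp (-x)) = q₀ * x := by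
      rw [h1me, hq0def]
      field_simp
      ring
    rw [hexp, Real.exp_neg (q₀ * x)]
    field_simp
end

section
/- Let p(n) = α log n / n with α > 0 a constant, and suppose α b_l < 1 for some type l ∈ {1,…,m}. Let I_n be the number of isolated vertices of type l in G_n (vertices of V^(l) with degree 0). Then I_n / (a_l n^{1−α b_l}) → 1 in probability as n → ∞; in particular G_n has isolated vertices of type l with high probability. -/
open Finset Filter
open scoped Classical

/-- Probability weight of a specific simple graph `G` on `Fin N` when each edge `{v,w}`
(`v < w`) is present independently with probability `pE v w`. -/
noncomputable def graphWeight {N : ℕ} (pE : Fin N → Fin N → ℝ) (G : SimpleGraph (Fin N)) : ℝ :=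
  ∏ v : Fin N, ∏ w ∈ Finset.univ.filter (fun w => v < w),
    (if G.Adj v w then pE v w else 1 - pE v w)

/-- Probability that the random graph on `Fin N`, whose edges are present independently with
probabilities `pE`, belongs to the set `S`. -/
noncomputable def graphProb {N : ℕ} (pE : Fin N → Fin N → ℝ) (S : Set (SimpleGraph (Fin N))) : ℝ :=
  ∑ G : SimpleGraph (Fin N), (if G ∈ S then graphWeight pE G else 0)

/-- The size of the connected component of `x` in `G`. -/
noncomputable def compSize {N : ℕ} (G : SimpleGraph (Fin N)) (x : Fin N) : ℕ :=
  {y | G.Reachable x y}.ncard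

/-- `C` is a largest connected component of `G`. -/
def IsLargestComponent {N : ℕ} (G : SimpleGraph (Fin N)) (C : Set (Fin N)) : Prop :=
  (∃ x, C = {y | G.Reachable x y}) ∧ ∀ x : Fin N, compSize G x ≤ C.ncard

/-- Edge probability between a vertex of type `k` and one of type `l`:
`c k l * p`, capped at `1` so that it is a probability. -/
noncomputable def edgeP {m : ℕ} (c : Fin m → Fin m → ℝ) (p : ℝ) (k l : Fin m) : ℝ :=
  min (c k l * p) 1

/-- `μ` is the Perron root of `Λ`: a nonnegative real eigenvalue whose modulus dominates
the modulus of every (complex) eigenvalue of `Λ`. -/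
def IsPerronRoot {m : ℕ} (Λ : Matrix (Fin m) (Fin m) ℝ) (μ : ℝ) : Prop :=
  0 ≤ μ ∧ Module.End.HasEigenvalue (Matrix.toLin' Λ) μ ∧
    ∀ z : ℂ, Module.End.HasEigenvalue (Matrix.toLin' (Λ.map (Complex.ofReal))) z →
      ‖z‖ ≤ μ

section Aux

abbrev Pairs (N : ℕ) := {q : Fin N × Fin N // q.1 < q.2}

variable {N : ℕ}

lemma prod_pairs_eq {M : Type*} [CommMonoid M] (f : Fin N → Fin N → M) :
    ∏ p : Pairs N, f p.1.1 p.1.2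
      = ∏ v : Fin N, ∏ w ∈ Finset.univ.filter (fun w => v < w), f v w := by
  rw [← Finset.prod_subtype (Finset.univ.filter (fun q : Fin N × Fin N => q.1 < q.2))
    (p := fun q => q.1 < q.2) (fun x => by simp) (fun q => f q.1 q.2)]
  rw [Finset.prod_filter]
  rw [← Finset.univ_product_univ, Finset.prod_product]
  congr 1
  funext v
  rw [Finset.prod_filter]

lemma graphWeight_eq (pE : Fin N → Fin N → ℝ) (G : SimpleGraph (Fin N)) :
    graphWeight pE G = ∏ p : Pairs N,
      (if G.Adj p.1.1 p.1.2 then pE p.1.1 p.1.2 else 1 - pE p.1.1 p.1.2) := by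
  rw [graphWeight, ← prod_pairs_eq (f := fun v w => if G.Adj v w then pE v w else 1 - pE v w)]

noncomputable def graphEquiv (N : ℕ) : SimpleGraph (Fin N) ≃ (Pairs N → Bool) where
  toFun G p := decide (G.Adj p.1.1 p.1.2)
  invFun f := SimpleGraph.fromRel (fun v w => ∃ h : v < w, f ⟨(v, w), h⟩)
  left_inv G := by
    ext v w
    simp only [SimpleGraph.fromRel_adj]
    constructor
    · rintro ⟨hne, (⟨h, hf⟩ | ⟨h, hf⟩)⟩ <;> simp only [decide_eq_true_eq] at hf
      · exact hf
      · exact hf.symm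
    · intro h
      refine ⟨G.ne_of_adj h, ?_⟩
      rcases lt_trichotomy v w with hlt | heq | hgt
      · exact Or.inl ⟨hlt, by simpa using h⟩
      · exact absurd heq (G.ne_of_adj h)
      · exact Or.inr ⟨hgt, by simpa using h.symm⟩
  right_inv f := by
    funext p
    obtain ⟨⟨v, w⟩, hvw⟩ := p
    simp only [SimpleGraph.fromRel_adj]
    by_cases hf : f ⟨(v, w), hvw⟩
    · simp [hf, hvw.ne, hvw]
    · simp only [Bool.not_eq_true] at hf
      rw [hf, decide_eq_false_iff_not]
      rintro ⟨hne, (⟨h, hf'⟩ | ⟨h, hf'⟩)⟩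
      · rw [hf] at hf'; exact absurd hf' (by simp)
      · exact absurd hvw (not_lt.mpr h.le)

/-- Master factorization lemma. -/
lemma sum_graphs_prod (φ : Pairs N → Bool → ℝ) :
    ∑ G : SimpleGraph (Fin N), ∏ p : Pairs N, φ p (graphEquiv N G p)
      = ∏ p : Pairs N, (φ p true + φ p false) := by
  rw [Equiv.sum_comp (graphEquiv N) (fun f => ∏ p : Pairs N, φ p (f p))]
  rw [show (∑ f : Pairs N → Bool, ∏ p : Pairs N, φ p (f p)) = ∏ p : Pairs N, ∑ b : Bool, φ p b
    from (Fintype.prod_sum φ).symm]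
  exact Finset.prod_congr rfl (fun p _ => by rw [Fintype.sum_bool])

lemma graphWeight_eq' (pE : Fin N → Fin N → ℝ) (G : SimpleGraph (Fin N)) :
    graphWeight pE G = ∏ p : Pairs N,
      (if graphEquiv N G p then pE p.1.1 p.1.2 else 1 - pE p.1.1 p.1.2) := by
  rw [graphWeight_eq]
  exact Finset.prod_congr rfl (fun p _ => if_congr (by simp [graphEquiv]) rfl rfl)

set_option maxHeartbeats 1000000 in
/-- Probability that all vertices in `D` are isolated. -/
lemma graphProb_isolated (pE : Fin N → Fin N → ℝ) (D : Finset (Fin N)) :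
    graphProb pE {G | ∀ v ∈ D, ∀ w, ¬ G.Adj v w}
      = ∏ p : Pairs N, (if p.1.1 ∈ D ∨ p.1.2 ∈ D then 1 - pE p.1.1 p.1.2 else 1) := by
  have key : ∀ G : SimpleGraph (Fin N),
      (if G ∈ {G : SimpleGraph (Fin N) | ∀ v ∈ D, ∀ w, ¬ G.Adj v w}
        then graphWeight pE G else 0)
      = ∏ p : Pairs N,
          ((if graphEquiv N G p then pE p.1.1 p.1.2 else 1 - pE p.1.1 p.1.2) *
            (if (p.1.1 ∈ D ∨ p.1.2 ∈ D) ∧ graphEquiv N G p then 0 else 1)) := by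
    intro G
    simp only [Set.mem_setOf_eq]
    by_cases h : ∀ v ∈ D, ∀ w, ¬ G.Adj v w
    · rw [if_pos h]
      rw [graphWeight_eq]
      refine Finset.prod_congr rfl (fun p _ => ?_)
      have h2 : ¬ ((p.1.1 ∈ D ∨ p.1.2 ∈ D) ∧ graphEquiv N G p) := by
        rintro ⟨ht, hadj⟩
        have hadj' : G.Adj p.1.1 p.1.2 := by
          simpa [graphEquiv] using hadj
        rcases ht with hv | hv
        · exact h _ hv _ hadj'
        · exact h _ hv _ hadj'.symm
      rw [if_neg h2, mul_one]
      rcases Bool.eq_false_or_eq_true (graphEquiv N G p) with hb | hb <;>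
        simp [hb, graphEquiv] at * <;> simp [*]
    · rw [if_neg h]
      push_neg at h
      obtain ⟨v, hvD, w, hadj⟩ := h
      have hne : v ≠ w := G.ne_of_adj hadj
      rcases hne.lt_or_gt with hlt | hgt
      · refine (Finset.prod_eq_zero (Finset.mem_univ (⟨(v, w), hlt⟩ : Pairs N)) ?_).symm
        have : graphEquiv N G ⟨(v, w), hlt⟩ = true := by simp [graphEquiv, hadj]
        simp [this, hvD]
      · refine (Finset.prod_eq_zero (Finset.mem_univ (⟨(w, v), hgt⟩ : Pairs N)) ?_).symm
        have : graphEquiv N G ⟨(w, v), hgt⟩ = true := by simp [graphEquiv, hadj.symm]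
        simp [this, hvD]
  rw [graphProb]
  have h2 := sum_graphs_prod (N := N) (fun p b =>
    (if b then pE p.1.1 p.1.2 else 1 - pE p.1.1 p.1.2) *
      (if (p.1.1 ∈ D ∨ p.1.2 ∈ D) ∧ b then 0 else 1))
  simp only [] at h2
  refine Eq.trans (Finset.sum_congr rfl (fun G _ => Eq.trans ?_ (key G))) (Eq.trans h2 ?_)
  · by_cases hG : G ∈ {G : SimpleGraph (Fin N) | ∀ v ∈ D, ∀ w, ¬ G.Adj v w}
    · rw [if_pos hG, if_pos hG]
    · rw [if_neg hG, if_neg hG]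
  refine Finset.prod_congr rfl (fun p _ => ?_)
  by_cases ht : p.1.1 ∈ D ∨ p.1.2 ∈ D <;> simp [ht]


section Basic
variable {N : ℕ} {pE : Fin N → Fin N → ℝ}

lemma graphWeight_nonneg (h0 : ∀ v w, 0 ≤ pE v w) (h1 : ∀ v w, pE v w ≤ 1)
    (G : SimpleGraph (Fin N)) : 0 ≤ graphWeight pE G := by
  rw [graphWeight]
  refine Finset.prod_nonneg (fun v _ => Finset.prod_nonneg (fun w _ => ?_))
  by_cases h : G.Adj v w
  · rw [if_pos h]; exact h0 v w
  · rw [if_neg h]; linarith [h1 v w]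

lemma sum_graphWeight (pE : Fin N → Fin N → ℝ) :
    ∑ G : SimpleGraph (Fin N), graphWeight pE G = 1 := by
  have h2 := sum_graphs_prod (N := N) (fun p b =>
    if b then pE p.1.1 p.1.2 else 1 - pE p.1.1 p.1.2)
  simp only [] at h2
  rw [Finset.sum_congr rfl (fun G _ => graphWeight_eq' pE G)]
  rw [h2]
  simp

lemma graphProb_nonneg (h0 : ∀ v w, 0 ≤ pE v w) (h1 : ∀ v w, pE v w ≤ 1)
    (S : Set (SimpleGraph (Fin N))) : 0 ≤ graphProb pE S := by
  refine Finset.sum_nonneg (fun G _ => ?_)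
  by_cases h : G ∈ S
  · rw [if_pos h]; exact graphWeight_nonneg h0 h1 G
  · rw [if_neg h]

lemma graphProb_mono (h0 : ∀ v w, 0 ≤ pE v w) (h1 : ∀ v w, pE v w ≤ 1)
    {S T : Set (SimpleGraph (Fin N))} (hST : S ⊆ T) :
    graphProb pE S ≤ graphProb pE T := by
  refine Finset.sum_le_sum (fun G _ => ?_)
  by_cases h : G ∈ S
  · rw [if_pos h, if_pos (hST h)]
  · rw [if_neg h]
    by_cases h' : G ∈ T
    · rw [if_pos h']; exact graphWeight_nonneg h0 h1 G
    · rw [if_neg h']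

lemma graphProb_le_one (h0 : ∀ v w, 0 ≤ pE v w) (h1 : ∀ v w, pE v w ≤ 1)
    (S : Set (SimpleGraph (Fin N))) : graphProb pE S ≤ 1 := by
  rw [← sum_graphWeight pE]
  refine Finset.sum_le_sum (fun G _ => ?_)
  by_cases h : G ∈ S
  · rw [if_pos h]
  · rw [if_neg h]; exact graphWeight_nonneg h0 h1 G

lemma graphProb_compl (pE : Fin N → Fin N → ℝ) (S : Set (SimpleGraph (Fin N))) :
    graphProb pE Sᶜ = 1 - graphProb pE S := by
  rw [← sum_graphWeight pE, graphProb, graphProb, ← Finset.sum_sub_distrib]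
  refine Finset.sum_congr rfl (fun G _ => ?_)
  by_cases h : G ∈ S
  · rw [if_pos h, if_neg (by simpa using h)]; ring
  · rw [if_neg h, if_pos (by simpa using h)]; ring

end Basic

section Eval
variable {N : ℕ}

/-- The probability that a single vertex `v` is isolated. -/
lemma prod_touch_single (g : Fin N → Fin N → ℝ) (hg : ∀ x y, g x y = g y x) (v : Fin N) :
    (∏ p : Pairs N, (if p.1.1 = v ∨ p.1.2 = v then g p.1.1 p.1.2 else 1))
      = ∏ w ∈ Finset.univ.erase v, g v w := by
  rw [prod_pairs_eq (f := fun x y => if x = v ∨ y = v then g x y else 1)]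
  rw [← Finset.mul_prod_erase Finset.univ _ (Finset.mem_univ v)]
  have h1 : ∏ w ∈ Finset.univ.filter (fun w => v < w),
      (if v = v ∨ w = v then g v w else 1)
      = ∏ w ∈ Finset.univ.filter (fun w => v < w), g v w :=
    Finset.prod_congr rfl (fun w _ => if_pos (Or.inl rfl))
  have h2 : ∀ x ∈ Finset.univ.erase v,
      (∏ w ∈ Finset.univ.filter (fun w => x < w), (if x = v ∨ w = v then g x w else 1))
        = if x < v then g x v else 1 := by
    intro x hx
    have hxv : x ≠ v := Finset.ne_of_mem_erase hx
    have : ∀ w, (x = v ∨ w = v) ↔ (w = v) := fun w => by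
      constructor
      · rintro (h | h)
        · exact absurd h hxv
        · exact h
      · exact Or.inr
    rw [Finset.prod_congr rfl (fun w _ => if_congr (this w) rfl rfl)]
    rw [Finset.prod_ite_eq' (Finset.univ.filter (fun w => x < w)) v (fun w => g x w)]
    simp
  rw [h1, Finset.prod_congr rfl h2]
  have h3 : ∏ x ∈ Finset.univ.erase v, (if x < v then g x v else 1)
      = ∏ x ∈ (Finset.univ.erase v).filter (fun x => x < v), g x v :=
    (Finset.prod_filter _ _).symm
  have h4 : (Finset.univ.erase v).filter (fun x => x < v)
      = Finset.univ.filter (fun x => x < v) := by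
    ext w
    simp only [Finset.mem_filter, Finset.mem_erase, Finset.mem_univ, true_and, and_true]
    exact ⟨fun h => h.2, fun h => ⟨ne_of_lt h, h⟩⟩
  rw [h3, h4]
  rw [← Finset.prod_filter_mul_prod_filter_not (Finset.univ.erase v) (fun w => v < w) (g v)]
  have h5 : (Finset.univ.erase v).filter (fun w => v < w)
      = Finset.univ.filter (fun w => v < w) := by
    ext w
    simp only [Finset.mem_filter, Finset.mem_erase, Finset.mem_univ, true_and, and_true]
    exact ⟨fun h => h.2, fun h => ⟨ne_of_gt h, h⟩⟩
  have h6 : (Finset.univ.erase v).filter (fun w => ¬ v < w)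
      = Finset.univ.filter (fun w => w < v) := by
    ext w
    simp only [Finset.mem_filter, Finset.mem_erase, Finset.mem_univ, true_and, and_true]
    constructor
    · rintro ⟨hne, hle⟩; exact lt_of_le_of_ne (not_lt.mp hle) hne
    · intro h; exact ⟨ne_of_lt h, not_lt.mpr (le_of_lt h)⟩
  rw [h5, h6]
  congr 1
  exact Finset.prod_congr rfl (fun x _ => hg x v)

lemma prod_touch_pair (g : Fin N → Fin N → ℝ) (hg : ∀ x y, g x y = g y x)
    {v w : Fin N} (hvw : v < w) :
    (∏ p : Pairs N,
        (if (p.1.1 = v ∨ p.1.1 = w) ∨ (p.1.2 = v ∨ p.1.2 = w) then g p.1.1 p.1.2 else 1))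
        * g v w
      = (∏ u ∈ Finset.univ.erase v, g v u) * ∏ u ∈ Finset.univ.erase w, g w u := by
  rw [← prod_touch_single g hg v, ← prod_touch_single g hg w, ← Finset.prod_mul_distrib]
  have key : ∀ p : Pairs N,
      (if p.1.1 = v ∨ p.1.2 = v then g p.1.1 p.1.2 else 1) *
        (if p.1.1 = w ∨ p.1.2 = w then g p.1.1 p.1.2 else 1)
      = (if (p.1.1 = v ∨ p.1.1 = w) ∨ (p.1.2 = v ∨ p.1.2 = w) then g p.1.1 p.1.2 else 1) *
        (if (p.1.1 = v ∨ p.1.2 = v) ∧ (p.1.1 = w ∨ p.1.2 = w) then g p.1.1 p.1.2 else 1) := by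
    intro p
    by_cases h1 : p.1.1 = v ∨ p.1.2 = v <;> by_cases h2 : p.1.1 = w ∨ p.1.2 = w
    · rw [if_pos h1, if_pos h2, if_pos (by tauto), if_pos ⟨h1, h2⟩]
    · rw [if_pos h1, if_neg h2, if_pos (by tauto), if_neg (by tauto)]
    · rw [if_neg h1, if_pos h2, if_pos (by tauto), if_neg (by tauto)]; ring
    · rw [if_neg h1, if_neg h2, if_neg (by tauto), if_neg (by tauto)]
  rw [Finset.prod_congr rfl (fun p _ => key p), Finset.prod_mul_distrib]
  congr 1
  rw [Finset.prod_eq_single_of_mem (⟨(v, w), hvw⟩ : Pairs N) (Finset.mem_univ _) ?_]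
  · simp
  · rintro ⟨⟨x, y⟩, hxy⟩ _ hne
    refine if_neg ?_
    rintro ⟨ha, hb⟩
    simp only at ha hb
    rcases ha with ha | ha <;> rcases hb with hb | hb
    · exact absurd (ha ▸ hb) (ne_of_lt hvw)
    · exact hne (by subst ha; subst hb; rfl)
    · exact absurd hvw (not_lt.mpr (le_of_lt (ha ▸ hb ▸ hxy)))
    · exact absurd (ha ▸ hb) (ne_of_lt hvw)

end Eval

section Moments
variable {N : ℕ} {pE : Fin N → Fin N → ℝ}

lemma graphProb_eq_sum (pE : Fin N → Fin N → ℝ) (Q : SimpleGraph (Fin N) → Prop)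
    {inst : DecidablePred Q} :
    (∑ G : SimpleGraph (Fin N), @ite _ (Q G) (inst G) (graphWeight pE G) 0)
      = graphProb pE {G | Q G} := by
  refine Finset.sum_congr rfl (fun G _ => ?_)
  by_cases h : Q G
  · rw [if_pos h, if_pos (show G ∈ {G | Q G} from h)]
  · rw [if_neg h, if_neg (show G ∉ {G | Q G} from h)]

/-- Chebyshev-type inequality. -/
lemma chebyshev (h0 : ∀ v w, 0 ≤ pE v w) (h1 : ∀ v w, pE v w ≤ 1)
    (X : SimpleGraph (Fin N) → ℝ) (μ₀ t : ℝ) (ht : 0 < t) :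
    t ^ 2 * graphProb pE {G | t ≤ |X G - μ₀|}
      ≤ ∑ G : SimpleGraph (Fin N), graphWeight pE G * (X G - μ₀) ^ 2 := by
  rw [graphProb, Finset.mul_sum]
  refine Finset.sum_le_sum (fun G _ => ?_)
  by_cases h : G ∈ {G : SimpleGraph (Fin N) | t ≤ |X G - μ₀|}
  · rw [if_pos h]
    rw [mul_comm (t ^ 2)]
    refine mul_le_mul_of_nonneg_left ?_ (graphWeight_nonneg h0 h1 G)
    calc t ^ 2 ≤ |X G - μ₀| ^ 2 := by
          refine pow_le_pow_left₀ (le_of_lt ht) ?_ 2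
          exact h
      _ = (X G - μ₀) ^ 2 := sq_abs _
  · rw [if_neg h, mul_zero]
    exact mul_nonneg (graphWeight_nonneg h0 h1 G) (sq_nonneg _)

lemma variance_expand (pE : Fin N → Fin N → ℝ) (X : SimpleGraph (Fin N) → ℝ) (μ₀ : ℝ) :
    ∑ G : SimpleGraph (Fin N), graphWeight pE G * (X G - μ₀) ^ 2
      = (∑ G : SimpleGraph (Fin N), graphWeight pE G * X G ^ 2)
        - 2 * μ₀ * (∑ G : SimpleGraph (Fin N), graphWeight pE G * X G) + μ₀ ^ 2 := by
  have h := sum_graphWeight pE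
  calc ∑ G : SimpleGraph (Fin N), graphWeight pE G * (X G - μ₀) ^ 2
      = ∑ G : SimpleGraph (Fin N), (graphWeight pE G * X G ^ 2
          - 2 * μ₀ * (graphWeight pE G * X G) + μ₀ ^ 2 * graphWeight pE G) := by
        refine Finset.sum_congr rfl (fun G _ => ?_); ring
    _ = _ := by
        rw [Finset.sum_add_distrib, Finset.sum_sub_distrib, ← Finset.mul_sum,
          ← Finset.mul_sum, h, mul_one]

/-- First moment of the isolated-vertex count over `T`. -/
lemma first_moment (pE : Fin N → Fin N → ℝ) (T : Finset (Fin N)) :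
    ∑ G : SimpleGraph (Fin N),
        graphWeight pE G * ((T.filter (fun v => ∀ w, ¬ G.Adj v w)).card : ℝ)
      = ∑ v ∈ T, graphProb pE {G | ∀ u ∈ ({v} : Finset (Fin N)), ∀ w, ¬ G.Adj u w} := by
  have hX : ∀ G : SimpleGraph (Fin N),
      ((T.filter (fun v => ∀ w, ¬ G.Adj v w)).card : ℝ)
        = ∑ v ∈ T, (if ∀ u ∈ ({v} : Finset (Fin N)), ∀ w, ¬ G.Adj u w then (1:ℝ) else 0) := by
    intro G
    rw [Finset.card_filter]
    push_cast
    refine Finset.sum_congr rfl (fun v _ => ?_)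
    refine if_congr ?_ rfl rfl
    simp
  calc ∑ G : SimpleGraph (Fin N),
        graphWeight pE G * ((T.filter (fun v => ∀ w, ¬ G.Adj v w)).card : ℝ)
      = ∑ G : SimpleGraph (Fin N), ∑ v ∈ T,
          (if ∀ u ∈ ({v} : Finset (Fin N)), ∀ w, ¬ G.Adj u w then graphWeight pE G else 0) := by
        refine Finset.sum_congr rfl (fun G _ => ?_)
        rw [hX, Finset.mul_sum]
        refine Finset.sum_congr rfl (fun v _ => ?_)
        by_cases h : ∀ u ∈ ({v} : Finset (Fin N)), ∀ w, ¬ G.Adj u w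
        · rw [if_pos h, if_pos h, mul_one]
        · rw [if_neg h, if_neg h, mul_zero]
    _ = _ := by
        rw [Finset.sum_comm]
        exact Finset.sum_congr rfl (fun v _ => graphProb_eq_sum pE _)

/-- Second moment of the isolated-vertex count over `T`. -/
lemma second_moment (pE : Fin N → Fin N → ℝ) (T : Finset (Fin N)) :
    ∑ G : SimpleGraph (Fin N),
        graphWeight pE G * ((T.filter (fun v => ∀ w, ¬ G.Adj v w)).card : ℝ) ^ 2
      = ∑ v ∈ T, ∑ u ∈ T,
          graphProb pE {G | ∀ x ∈ ({v, u} : Finset (Fin N)), ∀ w, ¬ G.Adj x w} := by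
  have hX : ∀ G : SimpleGraph (Fin N),
      ((T.filter (fun v => ∀ w, ¬ G.Adj v w)).card : ℝ) ^ 2
        = ∑ v ∈ T, ∑ u ∈ T,
            (if ∀ x ∈ ({v, u} : Finset (Fin N)), ∀ w, ¬ G.Adj x w then (1:ℝ) else 0) := by
    intro G
    rw [Finset.card_filter]
    push_cast
    rw [sq, Finset.sum_mul_sum]
    refine Finset.sum_congr rfl (fun v _ => Finset.sum_congr rfl (fun u _ => ?_))
    by_cases h1 : ∀ w, ¬ G.Adj v w <;> by_cases h2 : ∀ w, ¬ G.Adj u w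
    · rw [if_pos h1, if_pos h2, if_pos (by simp [h1, h2])]; norm_num
    · rw [if_pos h1, if_neg h2, if_neg (by simp [h2])]; norm_num
    · rw [if_neg h1, if_pos h2, if_neg (by simp [h1])]; norm_num
    · rw [if_neg h1, if_neg h2, if_neg (by simp [h1])]; norm_num
  calc ∑ G : SimpleGraph (Fin N),
        graphWeight pE G * ((T.filter (fun v => ∀ w, ¬ G.Adj v w)).card : ℝ) ^ 2
      = ∑ G : SimpleGraph (Fin N), ∑ v ∈ T, ∑ u ∈ T,
          (if ∀ x ∈ ({v, u} : Finset (Fin N)), ∀ w, ¬ G.Adj x w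
            then graphWeight pE G else 0) := by
        refine Finset.sum_congr rfl (fun G _ => ?_)
        rw [hX, Finset.mul_sum]
        refine Finset.sum_congr rfl (fun v _ => ?_)
        rw [Finset.mul_sum]
        refine Finset.sum_congr rfl (fun u _ => ?_)
        by_cases h : ∀ x ∈ ({v, u} : Finset (Fin N)), ∀ w, ¬ G.Adj x w
        · rw [if_pos h, if_pos h, mul_one]
        · rw [if_neg h, if_neg h, mul_zero]
    _ = _ := by
        rw [Finset.sum_comm]
        refine Finset.sum_congr rfl (fun v _ => ?_)
        rw [Finset.sum_comm]
        exact Finset.sum_congr rfl (fun u _ => graphProb_eq_sum pE _)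

end Moments

section Group
variable {N m : ℕ}

lemma prod_comp_type (s : Finset (Fin N)) (typ : Fin N → Fin m) (g : Fin m → ℝ) :
    ∏ u ∈ s, g (typ u) = ∏ l : Fin m, g l ^ (s.filter (fun u => typ u = l)).card := by
  rw [← Finset.prod_fiberwise_of_maps_to (fun x _ => Finset.mem_univ (typ x)) (fun u => g (typ u))]
  refine Finset.prod_congr rfl (fun l _ => ?_)
  rw [Finset.prod_congr rfl (fun u hu => by
    rw [(Finset.mem_filter.mp hu).2]), Finset.prod_const]

lemma card_filter_erase (v : Fin N) (typ : Fin N → Fin m) (l : Fin m) :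
    ((Finset.univ.erase v).filter (fun u => typ u = l)).card
      = (Finset.univ.filter (fun u => typ u = l)).card - (if typ v = l then 1 else 0) := by
  rw [Finset.filter_erase]
  by_cases h : typ v = l
  · rw [if_pos h, Finset.card_erase_of_mem (Finset.mem_filter.mpr ⟨Finset.mem_univ v, h⟩)]
  · rw [if_neg h, Finset.erase_eq_of_notMem
      (s := Finset.univ.filter (fun u => typ u = l)) (a := v)
      (fun hv => h (Finset.mem_filter.mp hv).2), Nat.sub_zero]

end Group


section Asymp
variable {m : ℕ}

lemma tendsto_log_div_nat : Tendsto (fun n : ℕ => Real.log n / n) atTop (nhds 0) := by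
  have h := (Real.tendsto_pow_log_div_mul_add_atTop 1 0 1 one_ne_zero).comp
    tendsto_natCast_atTop_atTop
  simpa [Function.comp_def] using h

lemma tendsto_logsq_div_nat : Tendsto (fun n : ℕ => (Real.log n) ^ 2 / n) atTop (nhds 0) := by
  have h := (Real.tendsto_pow_log_div_mul_add_atTop 1 0 2 one_ne_zero).comp
    tendsto_natCast_atTop_atTop
  simpa [Function.comp_def] using h

lemma tendsto_r_one (a : Fin m → ℝ) (ha : ∀ l, 0 < a l) (c' : Fin m → ℝ) (hc' : ∀ l, 0 ≤ c' l)
    (α : ℝ) (hα : 0 < α) (A : ℕ → Fin m → ℕ) (hA : ∀ n l, (A n l : ℝ) = a l * n)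
    (d : Fin m → ℕ) (hd : ∀ l, d l ≤ 1) :
    Tendsto (fun n : ℕ => (n:ℝ) ^ (α * ∑ l, a l * c' l) *
      ∏ l, (1 - min (c' l * (α * Real.log n / n)) 1) ^ (A n l - d l)) atTop (nhds 1) := by
  set b : ℝ := ∑ l, a l * c' l with hbdef
  set x : ℕ → Fin m → ℝ := fun n l => c' l * (α * Real.log n / n) with hxdef
  have hx : ∀ l, Tendsto (fun n => x n l) atTop (nhds 0) := by
    intro l
    have := tendsto_log_div_nat.const_mul (c' l * α)
    rw [mul_zero] at this
    refine this.congr (fun n => ?_)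
    simp only [hxdef]; ring
  have hxsmall : ∀ᶠ n : ℕ in atTop, 1 ≤ n ∧ ∀ l, x n l ≤ 1/2 := by
    refine (eventually_ge_atTop 1).and ?_
    exact Filter.eventually_all.mpr
      (fun l => (hx l).eventually (eventually_le_nhds (by norm_num)))
  have hx0 : ∀ n : ℕ, 1 ≤ n → ∀ l, 0 ≤ x n l := by
    intro n hn l
    have : (0:ℝ) ≤ Real.log n := Real.log_nonneg (by exact_mod_cast hn)
    have hn0 : (0:ℝ) ≤ n := Nat.cast_nonneg n
    exact mul_nonneg (hc' l) (div_nonneg (mul_nonneg hα.le this) hn0)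
  -- main term tendsto
  have hY : ∀ l, Tendsto (fun n : ℕ => (n:ℝ) * Real.log (1 - x n l) + c' l * α * Real.log n)
      atTop (nhds 0) := by
    intro l
    have hg : Tendsto (fun n : ℕ => 2 * (c' l * α)^2 * ((Real.log n)^2 / n)) atTop (nhds 0) := by
      have := tendsto_logsq_div_nat.const_mul (2 * (c' l * α)^2)
      rwa [mul_zero] at this
    refine squeeze_zero_norm' ?_ hg
    filter_upwards [hxsmall] with n hn
    obtain ⟨hn1, hhalf⟩ := hn
    have hx0' : 0 ≤ x n l := hx0 n hn1 l
    have hx2 : x n l ≤ 1/2 := hhalf l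
    have hnpos : (0:ℝ) < n := by exact_mod_cast hn1
    have hnx : (n:ℝ) * x n l = c' l * α * Real.log n := by
      simp only [hxdef]; field_simp
    have habs : |x n l + Real.log (1 - x n l)| ≤ |x n l|^2 / (1 - |x n l|) := by
      have h := Real.abs_log_sub_add_sum_range_le
        (x := x n l) (by rw [abs_of_nonneg hx0']; linarith) 1
      simpa using h
    have hxabs : |x n l| = x n l := abs_of_nonneg hx0'
    rw [hxabs] at habs
    have hbound : |x n l + Real.log (1 - x n l)| ≤ 2 * (x n l)^2 := by
      refine habs.trans ?_
      rw [div_le_iff₀ (by linarith)]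
      nlinarith [sq_nonneg (x n l)]
    have : ((n:ℝ) * Real.log (1 - x n l) + c' l * α * Real.log n)
        = (n:ℝ) * (x n l + Real.log (1 - x n l)) := by
      rw [mul_add, hnx]; ring
    rw [Real.norm_eq_abs, this, abs_mul, abs_of_nonneg hnpos.le]
    calc (n:ℝ) * |x n l + Real.log (1 - x n l)| ≤ (n:ℝ) * (2 * (x n l)^2) :=
          mul_le_mul_of_nonneg_left hbound hnpos.le
      _ = 2 * (c' l * α)^2 * ((Real.log n)^2 / n) := by
          simp only [hxdef]; field_simp
  have hZ : ∀ l, Tendsto (fun n : ℕ => Real.log (1 - x n l)) atTop (nhds 0) := by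
    intro l
    have h1 : Tendsto (fun n : ℕ => 1 - x n l) atTop (nhds 1) := by
      have := (tendsto_const_nhds (x := (1:ℝ)) (f := atTop (α := ℕ))).sub (hx l)
      rwa [sub_zero] at this
    have h2 := ((Real.continuousAt_log (one_ne_zero)).tendsto.comp h1)
    rwa [Real.log_one] at h2
  -- E tendsto 0
  have hE : Tendsto (fun n : ℕ => ∑ l, a l * ((n:ℝ) * Real.log (1 - x n l)
      + c' l * α * Real.log n) - ∑ l, (d l : ℝ) * Real.log (1 - x n l)) atTop (nhds 0) := by
    have h1 := tendsto_finset_sum Finset.univ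
      (fun l (_ : l ∈ Finset.univ) => ((hY l).const_mul (a l)))
    have h2 := tendsto_finset_sum Finset.univ
      (fun l (_ : l ∈ Finset.univ) => ((hZ l).const_mul ((d l : ℝ))))
    have := h1.sub h2
    simpa using this
  -- conclude
  have hexp := (Real.continuous_exp.tendsto 0).comp hE
  rw [Real.exp_zero] at hexp
  refine Tendsto.congr' ?_ hexp
  filter_upwards [hxsmall] with n hn
  obtain ⟨hn1, hhalf⟩ := hn
  have hnpos : (0:ℝ) < n := by exact_mod_cast hn1
  have hx0' := hx0 n hn1
  have hmin : ∀ l, min (c' l * (α * Real.log n / n)) 1 = x n l := by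
    intro l
    refine min_eq_left ?_
    have h := hhalf l
    simp only [hxdef] at h
    linarith
  have hpos : ∀ l, (0:ℝ) < 1 - x n l := fun l => by linarith [hhalf l]
  have hAd : ∀ l, d l ≤ A n l := by
    intro l
    have h1 : (0:ℝ) < (A n l : ℝ) := by
      rw [hA n l]
      exact mul_pos (ha l) hnpos
    have h2 : 0 < A n l := by exact_mod_cast h1
    exact le_trans (hd l) h2
  calc Real.exp (∑ l, a l * ((n:ℝ) * Real.log (1 - x n l) + c' l * α * Real.log n)
        - ∑ l, (d l : ℝ) * Real.log (1 - x n l))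
      = Real.exp (Real.log n * (α * b)
          + ∑ l, ((A n l : ℝ) - (d l : ℝ)) * Real.log (1 - x n l)) := by
        congr 1
        have key : ∀ l ∈ Finset.univ,
            a l * ((n:ℝ) * Real.log (1 - x n l) + c' l * α * Real.log n)
              - (d l : ℝ) * Real.log (1 - x n l)
            = ((A n l : ℝ) - (d l : ℝ)) * Real.log (1 - x n l)
              + a l * c' l * (α * Real.log n) := by
          intro l _
          rw [hA n l]; ring
        rw [← Finset.sum_sub_distrib, Finset.sum_congr rfl key, Finset.sum_add_distrib,
          ← Finset.sum_mul, hbdef]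
        ring
    _ = (n:ℝ) ^ (α * b) * ∏ l, (1 - min (c' l * (α * Real.log n / n)) 1) ^ (A n l - d l) := by
        rw [Real.exp_add, ← Real.rpow_def_of_pos hnpos]
        congr 1
        rw [Real.exp_sum]
        refine Finset.prod_congr rfl (fun l _ => ?_)
        rw [hmin l]
        rw [show ((A n l : ℝ) - (d l : ℝ)) = ((A n l - d l : ℕ) : ℝ) by
          rw [Nat.cast_sub (hAd l)]]
        rw [← Real.log_pow, Real.exp_log (pow_pos (hpos l) _)]


end Asymp

end Aux

set_option maxHeartbeats 2000000 in
/-- For `p(n) = α log n / n` with `α b_l < 1` for some type `l`, the number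
`I_n` of isolated vertices of type `l` satisfies `I_n / (a_l n^{1 - α b_l}) → 1` in
probability; in particular there are isolated vertices of type `l` w.h.p. -/
theorem isolated_vertices_subcritical
    (m : ℕ) (hm : 0 < m) (a : Fin m → ℝ) (ha : ∀ k, 0 < a k)
    (c : Fin m → Fin m → ℝ) (hcsymm : ∀ k l, c k l = c l k) (hcnn : ∀ k l, 0 ≤ c k l)
    (hirr : (SimpleGraph.fromRel (fun k l => 0 < c k l)).Connected)
    (α : ℝ) (hα : 0 < α)
    (l₀ : Fin m) (hsub : α * (∑ l, a l * c l₀ l) < 1)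
    (N : ℕ → ℕ) (typ : ∀ n, Fin (N n) → Fin m)
    (hcard : ∀ n k, (((Finset.univ.filter fun v => typ n v = k)).card : ℝ) = a k * n) :
    (∀ ε > (0 : ℝ),
      Tendsto (fun n : ℕ =>
          graphProb (fun v w => edgeP c (α * Real.log n / n) (typ n v) (typ n w))
            {G | ε < |(((Finset.univ.filter fun v =>
                  typ n v = l₀ ∧ ∀ w, ¬ G.Adj v w)).card : ℝ) /
                (a l₀ * (n : ℝ) ^ (1 - α * (∑ l, a l * c l₀ l))) - 1|})
        atTop (nhds 0)) ∧
    Tendsto (fun n : ℕ =>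
        graphProb (fun v w => edgeP c (α * Real.log n / n) (typ n v) (typ n w))
          {G | ∃ v, typ n v = l₀ ∧ ∀ w, ¬ G.Adj v w})
      atTop (nhds 1) := by
  classical
  set b : ℝ := ∑ l, a l * c l₀ l with hbdef
  -- nonnegativity of the edge probability parameter
  have hp0 : ∀ n : ℕ, 0 ≤ α * Real.log n / n := by
    intro n
    rcases Nat.eq_zero_or_pos n with h | h
    · subst h; simp
    · have h1 : (0:ℝ) ≤ Real.log n := Real.log_nonneg (by exact_mod_cast h)
      exact div_nonneg (mul_nonneg hα.le h1) (Nat.cast_nonneg n)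
  have hpe0 : ∀ n : ℕ, ∀ v w : Fin (N n),
      0 ≤ edgeP c (α * Real.log n / n) (typ n v) (typ n w) :=
    fun n v w => le_min (mul_nonneg (hcnn _ _) (hp0 n)) zero_le_one
  have hpe1 : ∀ n : ℕ, ∀ v w : Fin (N n),
      edgeP c (α * Real.log n / n) (typ n v) (typ n w) ≤ 1 :=
    fun n v w => min_le_right _ _
  have hsymg : ∀ n : ℕ, ∀ x y : Fin (N n),
      (1:ℝ) - edgeP c (α * Real.log n / n) (typ n x) (typ n y)
        = 1 - edgeP c (α * Real.log n / n) (typ n y) (typ n x) := by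
    intro n x y; rw [edgeP, edgeP, hcsymm]
  -- the per-vertex isolation probability
  set q : ℕ → ℝ := fun n => ∏ l, (1 - min (c l₀ l * (α * Real.log n / n)) 1) ^
      ((Finset.univ.filter (fun u => typ n u = l)).card - (if l₀ = l then 1 else 0)) with hqdef
  have hq0 : ∀ n, 0 ≤ q n := by
    intro n
    refine Finset.prod_nonneg (fun l _ => pow_nonneg ?_ _)
    have := min_le_right (c l₀ l * (α * Real.log n / n)) 1
    linarith
  have hQ : ∀ n : ℕ, ∀ v : Fin (N n), typ n v = l₀ →
      (∏ u ∈ Finset.univ.erase v,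
        (1 - edgeP c (α * Real.log n / n) (typ n v) (typ n u))) = q n := by
    intro n v htv
    calc ∏ u ∈ Finset.univ.erase v,
          (1 - edgeP c (α * Real.log n / n) (typ n v) (typ n u))
        = ∏ u ∈ Finset.univ.erase v,
            (fun l' => 1 - min (c l₀ l' * (α * Real.log n / n)) 1) (typ n u) :=
          Finset.prod_congr rfl (fun u _ => by rw [edgeP, htv])
      _ = ∏ l, (1 - min (c l₀ l * (α * Real.log n / n)) 1) ^
            (((Finset.univ.erase v).filter (fun u => typ n u = l)).card) :=
          prod_comp_type (Finset.univ.erase v) (typ n)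
            (fun l' => 1 - min (c l₀ l' * (α * Real.log n / n)) 1)
      _ = q n := by
          refine Finset.prod_congr rfl (fun l _ => ?_)
          rw [card_filter_erase, htv]
  -- single-vertex isolation probability
  have hsingle : ∀ n : ℕ, ∀ v : Fin (N n), typ n v = l₀ →
      graphProb (fun v w => edgeP c (α * Real.log n / n) (typ n v) (typ n w))
        {G | ∀ u ∈ ({v} : Finset (Fin (N n))), ∀ w, ¬ G.Adj u w} = q n := by
    intro n v htv
    rw [graphProb_isolated]
    have h1 : (∏ p : Pairs (N n),
        if p.1.1 ∈ ({v} : Finset (Fin (N n))) ∨ p.1.2 ∈ ({v} : Finset (Fin (N n))) then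
          1 - edgeP c (α * Real.log n / n) (typ n p.1.1) (typ n p.1.2) else 1)
      = ∏ p : Pairs (N n),
        (if p.1.1 = v ∨ p.1.2 = v then
          1 - edgeP c (α * Real.log n / n) (typ n p.1.1) (typ n p.1.2) else 1) :=
      Finset.prod_congr rfl (fun p _ => if_congr (by simp) rfl rfl)
    rw [h1, prod_touch_single _ (hsymg n) v, hQ n v htv]
  -- pair isolation probability
  have hpair : ∀ n : ℕ, ∀ v u : Fin (N n), typ n v = l₀ → typ n u = l₀ → v ≠ u →
      graphProb (fun v w => edgeP c (α * Real.log n / n) (typ n v) (typ n w))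
          {G | ∀ x ∈ ({v, u} : Finset (Fin (N n))), ∀ w, ¬ G.Adj x w}
        * (1 - min (c l₀ l₀ * (α * Real.log n / n)) 1) = q n ^ 2 := by
    intro n v u htv htu hne
    rw [graphProb_isolated]
    have hval : (1:ℝ) - edgeP c (α * Real.log n / n) (typ n v) (typ n u)
        = 1 - min (c l₀ l₀ * (α * Real.log n / n)) 1 := by
      rw [edgeP, htv, htu]
    rcases hne.lt_or_gt with hlt | hlt
    · have h1 : (∏ p : Pairs (N n),
          if p.1.1 ∈ ({v, u} : Finset (Fin (N n))) ∨ p.1.2 ∈ ({v, u} : Finset (Fin (N n))) then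
            1 - edgeP c (α * Real.log n / n) (typ n p.1.1) (typ n p.1.2) else 1)
        = ∏ p : Pairs (N n),
          (if (p.1.1 = v ∨ p.1.1 = u) ∨ (p.1.2 = v ∨ p.1.2 = u) then
            1 - edgeP c (α * Real.log n / n) (typ n p.1.1) (typ n p.1.2) else 1) :=
        Finset.prod_congr rfl (fun p _ => if_congr (by simp) rfl rfl)
      have h2 := prod_touch_pair
        (fun x y => 1 - edgeP c (α * Real.log n / n) (typ n x) (typ n y)) (hsymg n) hlt
      rw [hval] at h2
      rw [h1, h2, hQ n v htv, hQ n u htu, sq]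
    · have h1 : (∏ p : Pairs (N n),
          if p.1.1 ∈ ({v, u} : Finset (Fin (N n))) ∨ p.1.2 ∈ ({v, u} : Finset (Fin (N n))) then
            1 - edgeP c (α * Real.log n / n) (typ n p.1.1) (typ n p.1.2) else 1)
        = ∏ p : Pairs (N n),
          (if (p.1.1 = u ∨ p.1.1 = v) ∨ (p.1.2 = u ∨ p.1.2 = v) then
            1 - edgeP c (α * Real.log n / n) (typ n p.1.1) (typ n p.1.2) else 1) :=
        Finset.prod_congr rfl (fun p _ => if_congr (by simp; tauto) rfl rfl)
      have h2 := prod_touch_pair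
        (fun x y => 1 - edgeP c (α * Real.log n / n) (typ n x) (typ n y)) (hsymg n) hlt
      have hval' : (1:ℝ) - edgeP c (α * Real.log n / n) (typ n u) (typ n v)
          = 1 - min (c l₀ l₀ * (α * Real.log n / n)) 1 := by
        rw [edgeP, htv, htu]
      rw [hval'] at h2
      rw [h1, h2, hQ n v htv, hQ n u htu, sq]
  -- first and second moments
  have hXT : ∀ n : ℕ, ∀ G : SimpleGraph (Fin (N n)),
      (Finset.univ.filter fun v => typ n v = l₀ ∧ ∀ w, ¬ G.Adj v w)
        = (Finset.univ.filter (fun v => typ n v = l₀)).filter (fun v => ∀ w, ¬ G.Adj v w) := by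
    intro n G; rw [Finset.filter_filter]
  have hEX : ∀ n : ℕ,
      (∑ G : SimpleGraph (Fin (N n)),
        graphWeight (fun v w => edgeP c (α * Real.log n / n) (typ n v) (typ n w)) G *
          ((Finset.univ.filter fun v => typ n v = l₀ ∧ ∀ w, ¬ G.Adj v w).card : ℝ))
      = (a l₀ * n) * q n := by
    intro n
    calc (∑ G : SimpleGraph (Fin (N n)),
        graphWeight (fun v w => edgeP c (α * Real.log n / n) (typ n v) (typ n w)) G *
          ((Finset.univ.filter fun v => typ n v = l₀ ∧ ∀ w, ¬ G.Adj v w).card : ℝ))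
        = ∑ G : SimpleGraph (Fin (N n)),
            graphWeight (fun v w => edgeP c (α * Real.log n / n) (typ n v) (typ n w)) G *
            ((((Finset.univ.filter (fun v => typ n v = l₀)).filter
              (fun v => ∀ w, ¬ G.Adj v w)).card : ℝ)) := by
          refine Finset.sum_congr rfl (fun G _ => ?_)
          rw [hXT n G]
      _ = ∑ v ∈ Finset.univ.filter (fun v => typ n v = l₀),
            graphProb (fun v w => edgeP c (α * Real.log n / n) (typ n v) (typ n w))
              {G | ∀ u ∈ ({v} : Finset (Fin (N n))), ∀ w, ¬ G.Adj u w} :=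
          first_moment _ _
      _ = ∑ v ∈ Finset.univ.filter (fun v => typ n v = l₀), q n :=
          Finset.sum_congr rfl (fun v hv => hsingle n v (Finset.mem_filter.mp hv).2)
      _ = ((Finset.univ.filter (fun v => typ n v = l₀)).card : ℝ) * q n := by
          rw [Finset.sum_const, nsmul_eq_mul]
      _ = (a l₀ * n) * q n := by rw [hcard n l₀]
  have hEX2 : ∀ n : ℕ, (0:ℝ) < 1 - min (c l₀ l₀ * (α * Real.log n / n)) 1 →
      (∑ G : SimpleGraph (Fin (N n)),
        graphWeight (fun v w => edgeP c (α * Real.log n / n) (typ n v) (typ n w)) G *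
          ((Finset.univ.filter fun v => typ n v = l₀ ∧ ∀ w, ¬ G.Adj v w).card : ℝ) ^ 2)
      ≤ (a l₀ * n) * q n + (a l₀ * n)^2 *
          (q n ^ 2 / (1 - min (c l₀ l₀ * (α * Real.log n / n)) 1)) := by
    intro n hpos
    have hqd : (0:ℝ) ≤ q n ^ 2 / (1 - min (c l₀ l₀ * (α * Real.log n / n)) 1) :=
      div_nonneg (sq_nonneg _) hpos.le
    have hcn : (0:ℝ) ≤ a l₀ * n := mul_nonneg (ha l₀).le (Nat.cast_nonneg n)
    calc (∑ G : SimpleGraph (Fin (N n)),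
        graphWeight (fun v w => edgeP c (α * Real.log n / n) (typ n v) (typ n w)) G *
          ((Finset.univ.filter fun v => typ n v = l₀ ∧ ∀ w, ¬ G.Adj v w).card : ℝ) ^ 2)
        = ∑ G : SimpleGraph (Fin (N n)),
            graphWeight (fun v w => edgeP c (α * Real.log n / n) (typ n v) (typ n w)) G *
            ((((Finset.univ.filter (fun v => typ n v = l₀)).filter
              (fun v => ∀ w, ¬ G.Adj v w)).card : ℝ)) ^ 2 := by
          refine Finset.sum_congr rfl (fun G _ => ?_)
          rw [hXT n G]
      _ = ∑ v ∈ Finset.univ.filter (fun v => typ n v = l₀),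
          ∑ u ∈ Finset.univ.filter (fun v => typ n v = l₀),
            graphProb (fun v w => edgeP c (α * Real.log n / n) (typ n v) (typ n w))
              {G | ∀ x ∈ ({v, u} : Finset (Fin (N n))), ∀ w, ¬ G.Adj x w} :=
          second_moment _ _
      _ ≤ ∑ v ∈ Finset.univ.filter (fun v => typ n v = l₀),
            (q n + (a l₀ * n) *
              (q n ^ 2 / (1 - min (c l₀ l₀ * (α * Real.log n / n)) 1))) := by
          refine Finset.sum_le_sum (fun v hv => ?_)
          have htv := (Finset.mem_filter.mp hv).2
          rw [← Finset.add_sum_erase _ _ hv]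
          have hdiag : graphProb (fun v w => edgeP c (α * Real.log n / n) (typ n v) (typ n w))
              {G | ∀ x ∈ ({v, v} : Finset (Fin (N n))), ∀ w, ¬ G.Adj x w} = q n := by
            have hvv : ({v, v} : Finset (Fin (N n))) = {v} := by simp
            rw [hvv]
            exact hsingle n v htv
          rw [hdiag]
          refine add_le_add le_rfl ?_
          have hoff : ∀ u ∈ (Finset.univ.filter (fun v => typ n v = l₀)).erase v,
              graphProb (fun v w => edgeP c (α * Real.log n / n) (typ n v) (typ n w))
                {G | ∀ x ∈ ({v, u} : Finset (Fin (N n))), ∀ w, ¬ G.Adj x w}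
              = q n ^ 2 / (1 - min (c l₀ l₀ * (α * Real.log n / n)) 1) := by
            intro u hu
            have hne : u ≠ v := (Finset.mem_erase.mp hu).1
            have htu := (Finset.mem_filter.mp (Finset.mem_erase.mp hu).2).2
            rw [eq_div_iff hpos.ne']
            exact hpair n v u htv htu hne.symm
          rw [Finset.sum_congr rfl hoff, Finset.sum_const, nsmul_eq_mul]
          refine mul_le_mul_of_nonneg_right ?_ hqd
          calc ((((Finset.univ.filter (fun v => typ n v = l₀)).erase v).card : ℝ))
              ≤ (((Finset.univ.filter (fun v => typ n v = l₀)).card : ℝ)) := by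
                exact_mod_cast Finset.card_le_card (Finset.erase_subset _ _)
            _ = a l₀ * n := hcard n l₀
      _ = (a l₀ * n) * q n + (a l₀ * n)^2 *
            (q n ^ 2 / (1 - min (c l₀ l₀ * (α * Real.log n / n)) 1)) := by
          rw [Finset.sum_const, nsmul_eq_mul, hcard n l₀]
          ring
  -- limits
  have hr : Tendsto (fun n : ℕ => (n:ℝ) ^ (α * b) * q n) atTop (nhds 1) := by
    have h := tendsto_r_one a ha (fun l => c l₀ l) (fun l => hcnn l₀ l) α hα
      (fun n l => (Finset.univ.filter (fun u => typ n u = l)).card)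
      (fun n l => hcard n l) (fun l => if l₀ = l then 1 else 0)
      (fun l => by by_cases h : l₀ = l <;> simp [h])
    exact h
  have hp₀ : Tendsto (fun n : ℕ => min (c l₀ l₀ * (α * Real.log n / n)) 1) atTop (nhds 0) := by
    have hx : Tendsto (fun n : ℕ => c l₀ l₀ * (α * Real.log n / n)) atTop (nhds 0) := by
      have h := tendsto_log_div_nat.const_mul (c l₀ l₀ * α)
      rw [mul_zero] at h
      refine h.congr (fun n => by ring)
    have h2 := hx.min (tendsto_const_nhds (x := (1:ℝ)))
    rwa [min_eq_left zero_le_one] at h2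
  have hp₀ev : ∀ᶠ n : ℕ in atTop, min (c l₀ l₀ * (α * Real.log n / n)) 1 ≤ 1/2 :=
    hp₀.eventually (eventually_le_nhds (by norm_num))
  have hB : Tendsto (fun n : ℕ => a l₀ * (n:ℝ) ^ (1 - α * b)) atTop atTop := by
    have h1 : (0:ℝ) < 1 - α * b := by linarith
    have h2 := (tendsto_rpow_atTop h1).comp tendsto_natCast_atTop_atTop
    exact h2.const_mul_atTop (ha l₀)
  -- identity A*q = B*r for n ≥ 1
  have hAqBr : ∀ n : ℕ, 1 ≤ n →
      a l₀ * (n:ℝ) * q n = (a l₀ * (n:ℝ) ^ (1 - α * b)) * ((n:ℝ) ^ (α * b) * q n) := by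
    intro n hn
    have hnpos : (0:ℝ) < n := by exact_mod_cast hn
    have : (n:ℝ) ^ (1 - α * b) * (n:ℝ) ^ (α * b) = (n:ℝ) := by
      rw [← Real.rpow_add hnpos, sub_add_cancel, Real.rpow_one]
    calc a l₀ * (n:ℝ) * q n
        = a l₀ * ((n:ℝ) ^ (1 - α * b) * (n:ℝ) ^ (α * b)) * q n := by rw [this]
      _ = (a l₀ * (n:ℝ) ^ (1 - α * b)) * ((n:ℝ) ^ (α * b) * q n) := by ring
  -- Part 1
  have part1 : ∀ ε > (0 : ℝ),
      Tendsto (fun n : ℕ =>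
          graphProb (fun v w => edgeP c (α * Real.log n / n) (typ n v) (typ n w))
            {G | ε < |(((Finset.univ.filter fun v =>
                  typ n v = l₀ ∧ ∀ w, ¬ G.Adj v w)).card : ℝ) /
                (a l₀ * (n : ℝ) ^ (1 - α * b)) - 1|})
        atTop (nhds 0) := by
    intro ε hε
    set F : ℕ → ℝ := fun n =>
      (a l₀ * (n:ℝ) * q n + (a l₀ * (n:ℝ) * q n)^2 *
        ((min (c l₀ l₀ * (α * Real.log n / n)) 1) /
          (1 - min (c l₀ l₀ * (α * Real.log n / n)) 1)))
      / ((ε/2) * (a l₀ * (n:ℝ) ^ (1 - α * b)))^2 with hFdef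
    have hrev : ∀ᶠ n : ℕ in atTop, |(n:ℝ)^(α*b) * q n - 1| ≤ ε/2 := by
      obtain ⟨n₀, hn₀⟩ := Metric.tendsto_atTop.mp hr (ε/2) (half_pos hε)
      filter_upwards [eventually_ge_atTop n₀] with n hn
      have := hn₀ n hn
      rw [Real.dist_eq] at this
      exact this.le
    -- the probability is bounded by F n eventually
    have hPF : ∀ᶠ n : ℕ in atTop,
        graphProb (fun v w => edgeP c (α * Real.log n / n) (typ n v) (typ n w))
            {G | ε < |(((Finset.univ.filter fun v =>
                  typ n v = l₀ ∧ ∀ w, ¬ G.Adj v w)).card : ℝ) /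
                (a l₀ * (n : ℝ) ^ (1 - α * b)) - 1|} ≤ F n := by
      filter_upwards [eventually_ge_atTop 1, hp₀ev, hrev] with n hn1 hhalf hre
      have hnpos : (0:ℝ) < n := by exact_mod_cast hn1
      have hBpos : (0:ℝ) < a l₀ * (n:ℝ) ^ (1 - α * b) :=
        mul_pos (ha l₀) (Real.rpow_pos_of_pos hnpos _)
      have hposd : (0:ℝ) < 1 - min (c l₀ l₀ * (α * Real.log n / n)) 1 := by linarith
      set B : ℝ := a l₀ * (n:ℝ) ^ (1 - α * b) with hBdef
      set μ₀ : ℝ := a l₀ * (n:ℝ) * q n with hμdef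
      have ht : (0:ℝ) < ε/2 * B := mul_pos (half_pos hε) hBpos
      -- subset step
      have hsub2 : {G : SimpleGraph (Fin (N n)) | ε < |(((Finset.univ.filter fun v =>
              typ n v = l₀ ∧ ∀ w, ¬ G.Adj v w)).card : ℝ) / B - 1|}
          ⊆ {G : SimpleGraph (Fin (N n)) | ε/2 * B ≤ |(((Finset.univ.filter fun v =>
              typ n v = l₀ ∧ ∀ w, ¬ G.Adj v w)).card : ℝ) - μ₀|} := by
        intro G hG
        simp only [Set.mem_setOf_eq] at hG ⊢
        set X : ℝ := (((Finset.univ.filter fun v =>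
          typ n v = l₀ ∧ ∀ w, ¬ G.Adj v w)).card : ℝ) with hXdef
        have h1 : X / B - 1 = (X - B) / B := by field_simp
        have h2 : |X / B - 1| = |X - B| / B := by
          rw [h1, abs_div, abs_of_pos hBpos]
        have h3 : ε * B < |X - B| := by
          rw [h2] at hG
          calc ε * B < (|X - B| / B) * B := by
                exact mul_lt_mul_of_pos_right hG hBpos
            _ = |X - B| := by field_simp
        have h4 : |μ₀ - B| ≤ ε/2 * B := by
          have : μ₀ - B = B * ((n:ℝ)^(α*b) * q n - 1) := by
            rw [hμdef, hAqBr n hn1]; ring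
          rw [this, abs_mul, abs_of_pos hBpos]
          calc B * |(n:ℝ)^(α*b) * q n - 1| ≤ B * (ε/2) :=
                mul_le_mul_of_nonneg_left hre hBpos.le
            _ = ε/2 * B := by ring
        have h5 := abs_sub_le X μ₀ B
        linarith
      have hmono := graphProb_mono (hpe0 n) (hpe1 n) hsub2
      -- Chebyshev bound
      have hch := chebyshev (hpe0 n) (hpe1 n)
        (fun G => (((Finset.univ.filter fun v =>
          typ n v = l₀ ∧ ∀ w, ¬ G.Adj v w)).card : ℝ)) μ₀ (ε/2 * B) ht
      have hvar := variance_expand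
        (fun v w => edgeP c (α * Real.log n / n) (typ n v) (typ n w))
        (fun G => (((Finset.univ.filter fun v =>
          typ n v = l₀ ∧ ∀ w, ¬ G.Adj v w)).card : ℝ)) μ₀
      rw [hvar, hEX n] at hch
      have hbound := hEX2 n hposd
      have hvarbound : (∑ G : SimpleGraph (Fin (N n)),
          graphWeight (fun v w => edgeP c (α * Real.log n / n) (typ n v) (typ n w)) G *
            ((Finset.univ.filter fun v => typ n v = l₀ ∧ ∀ w, ¬ G.Adj v w).card : ℝ) ^ 2)
          - 2 * μ₀ * (a l₀ * (n:ℝ) * q n) + μ₀ ^ 2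
          ≤ μ₀ + μ₀^2 * ((min (c l₀ l₀ * (α * Real.log n / n)) 1) /
              (1 - min (c l₀ l₀ * (α * Real.log n / n)) 1)) := by
        have hqid : (a l₀ * (n:ℝ))^2 * (q n ^ 2 /
              (1 - min (c l₀ l₀ * (α * Real.log n / n)) 1))
            - μ₀^2 = μ₀^2 * ((min (c l₀ l₀ * (α * Real.log n / n)) 1) /
              (1 - min (c l₀ l₀ * (α * Real.log n / n)) 1)) := by
          have key : ∀ (A Q P : ℝ), 1 - P ≠ 0 →
              A^2 * (Q^2/(1-P)) - (A*Q)^2 = (A*Q)^2 * (P/(1-P)) := by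
            intro A Q P hP
            field_simp
            ring
          rw [hμdef]
          exact key (a l₀ * (n:ℝ)) (q n) _ hposd.ne'
        have hμq : μ₀ = a l₀ * (n:ℝ) * q n := hμdef
        rw [← hμq]
        linarith [hbound, hqid]
      have hchain : (ε/2 * B)^2 * graphProb
          (fun v w => edgeP c (α * Real.log n / n) (typ n v) (typ n w))
          {G : SimpleGraph (Fin (N n)) | ε/2 * B ≤ |(((Finset.univ.filter fun v =>
            typ n v = l₀ ∧ ∀ w, ¬ G.Adj v w)).card : ℝ) - μ₀|}
          ≤ μ₀ + μ₀^2 * ((min (c l₀ l₀ * (α * Real.log n / n)) 1) /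
              (1 - min (c l₀ l₀ * (α * Real.log n / n)) 1)) :=
        le_trans hch hvarbound
      have hFn : F n = (μ₀ + μ₀^2 * ((min (c l₀ l₀ * (α * Real.log n / n)) 1) /
              (1 - min (c l₀ l₀ * (α * Real.log n / n)) 1))) / (ε/2 * B)^2 := rfl
      rw [hFn]
      rw [le_div_iff₀ (by positivity)]
      calc graphProb (fun v w => edgeP c (α * Real.log n / n) (typ n v) (typ n w))
            {G | ε < |(((Finset.univ.filter fun v =>
                typ n v = l₀ ∧ ∀ w, ¬ G.Adj v w)).card : ℝ) / B - 1|} * (ε/2 * B)^2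
          ≤ graphProb (fun v w => edgeP c (α * Real.log n / n) (typ n v) (typ n w))
            {G : SimpleGraph (Fin (N n)) | ε/2 * B ≤ |(((Finset.univ.filter fun v =>
              typ n v = l₀ ∧ ∀ w, ¬ G.Adj v w)).card : ℝ) - μ₀|} * (ε/2 * B)^2 :=
            mul_le_mul_of_nonneg_right hmono (by positivity)
        _ ≤ μ₀ + μ₀^2 * ((min (c l₀ l₀ * (α * Real.log n / n)) 1) /
              (1 - min (c l₀ l₀ * (α * Real.log n / n)) 1)) := by
            rw [mul_comm]; exact hchain
    -- F tends to 0
    have hF0 : Tendsto F atTop (nhds 0) := by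
      have g1 : Tendsto (fun n : ℕ => ((n:ℝ)^(α*b) * q n) /
          (a l₀ * (n:ℝ) ^ (1 - α * b))) atTop (nhds 0) := hr.div_atTop hB
      have g2 : Tendsto (fun n : ℕ => ((n:ℝ)^(α*b) * q n)^2 *
          ((min (c l₀ l₀ * (α * Real.log n / n)) 1) /
            (1 - min (c l₀ l₀ * (α * Real.log n / n)) 1))) atTop (nhds 0) := by
        have hd : Tendsto (fun n : ℕ => (min (c l₀ l₀ * (α * Real.log n / n)) 1) /
            (1 - min (c l₀ l₀ * (α * Real.log n / n)) 1)) atTop (nhds 0) := by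
          have h1 : Tendsto (fun n : ℕ =>
              1 - min (c l₀ l₀ * (α * Real.log n / n)) 1) atTop (nhds 1) := by
            have := (tendsto_const_nhds (x := (1:ℝ)) (f := (atTop : Filter ℕ))).sub hp₀
            rwa [sub_zero] at this
          have := hp₀.div h1 one_ne_zero
          rwa [zero_div] at this
        have := (hr.pow 2).mul hd
        rwa [mul_zero] at this
      have hsum := g1.add g2
      rw [add_zero] at hsum
      have hmul := hsum.const_mul (4/ε^2)
      rw [mul_zero] at hmul
      refine Tendsto.congr' ?_ hmul
      filter_upwards [eventually_ge_atTop 1, hp₀ev] with n hn1 hhalf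
      have hnpos : (0:ℝ) < n := by exact_mod_cast hn1
      have hBpos : (0:ℝ) < a l₀ * (n:ℝ) ^ (1 - α * b) :=
        mul_pos (ha l₀) (Real.rpow_pos_of_pos hnpos _)
      have hposd : (0:ℝ) < 1 - min (c l₀ l₀ * (α * Real.log n / n)) 1 := by linarith
      rw [hFdef]
      simp only []
      rw [hAqBr n hn1]
      field_simp [(ha l₀).ne']
      ring
    refine squeeze_zero' ?_ hPF hF0
    exact Eventually.of_forall (fun n => graphProb_nonneg (hpe0 n) (hpe1 n) _)
  refine ⟨part1, ?_⟩
  -- Part 2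
  have h12 := part1 (1/2) (by norm_num)
  have hlow : ∀ᶠ n : ℕ in atTop,
      1 - graphProb (fun v w => edgeP c (α * Real.log n / n) (typ n v) (typ n w))
            {G | (1:ℝ)/2 < |(((Finset.univ.filter fun v =>
                  typ n v = l₀ ∧ ∀ w, ¬ G.Adj v w)).card : ℝ) /
                (a l₀ * (n : ℝ) ^ (1 - α * b)) - 1|}
        ≤ graphProb (fun v w => edgeP c (α * Real.log n / n) (typ n v) (typ n w))
            {G | ∃ v, typ n v = l₀ ∧ ∀ w, ¬ G.Adj v w} := by
    filter_upwards [eventually_ge_atTop 1] with n hn1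
    have hnpos : (0:ℝ) < n := by exact_mod_cast hn1
    have hBpos : (0:ℝ) < a l₀ * (n:ℝ) ^ (1 - α * b) :=
      mul_pos (ha l₀) (Real.rpow_pos_of_pos hnpos _)
    rw [← graphProb_compl]
    refine graphProb_mono (hpe0 n) (hpe1 n) ?_
    intro G hG
    simp only [Set.mem_compl_iff, Set.mem_setOf_eq, not_lt] at hG
    simp only [Set.mem_setOf_eq]
    set X : ℝ := (((Finset.univ.filter fun v =>
      typ n v = l₀ ∧ ∀ w, ¬ G.Adj v w)).card : ℝ) with hXdef
    have habs := abs_le.mp hG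
    have hX : 0 < X := by
      have h1 : -(1/2 : ℝ) ≤ X / (a l₀ * (n:ℝ) ^ (1 - α * b)) - 1 := habs.1
      have h2 : (1:ℝ)/2 ≤ X / (a l₀ * (n:ℝ) ^ (1 - α * b)) := by linarith
      have h3 := (le_div_iff₀ hBpos).mp h2
      linarith
    rw [hXdef] at hX
    have hcard : 0 < ((Finset.univ.filter fun v =>
        typ n v = l₀ ∧ ∀ w, ¬ G.Adj v w)).card := by exact_mod_cast hX
    obtain ⟨v, hv⟩ := Finset.card_pos.mp hcard
    exact ⟨v, (Finset.mem_filter.mp hv).2⟩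
  have hup : ∀ᶠ n : ℕ in atTop,
      graphProb (fun v w => edgeP c (α * Real.log n / n) (typ n v) (typ n w))
          {G | ∃ v, typ n v = l₀ ∧ ∀ w, ¬ G.Adj v w} ≤ 1 :=
    Eventually.of_forall (fun n => graphProb_le_one (hpe0 n) (hpe1 n) _)
  have hlowlim : Tendsto (fun n : ℕ =>
      1 - graphProb (fun v w => edgeP c (α * Real.log n / n) (typ n v) (typ n w))
            {G | (1:ℝ)/2 < |(((Finset.univ.filter fun v =>
                  typ n v = l₀ ∧ ∀ w, ¬ G.Adj v w)).card : ℝ) /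
                (a l₀ * (n : ℝ) ^ (1 - α * b)) - 1|}) atTop (nhds 1) := by
    have := (tendsto_const_nhds (x := (1:ℝ)) (f := (atTop : Filter ℕ))).sub h12
    rwa [sub_zero] at this
  exact tendsto_of_tendsto_of_tendsto_of_le_of_le' hlowlim tendsto_const_nhds hlow hup
end
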